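/- Let p_1,…,p_n > 0 with Σ_i p_i = 1, let x ∈ E, let δ = (δ_1,…,δ_n) with δ_i ≥ 0, and let T = (T_1,…,T_n) ∈ E satisfy, for each i, ⟨∇_i f(x), T_i⟩ + (L_i/2)‖T_i‖² ≤ min{ 0, δ_i + inf_{s ∈ E_i}(⟨∇_i f(x), s⟩ + (L_i/2)‖s‖²) }. Then Σ_{i=1}^n p_i · f(x + U_i T_i) ≤ f(x) − (1/2) Σ_{i=1}^n (p_i/L_i) ‖∇_i f(x)‖² + Σ_{i=1}^n p_i δ_i. -/

import Mathlib

open scoped RealInnerProductSpace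
open MeasureTheory

noncomputable section

variable {n : ℕ} {E : Fin n → Type*} [∀ i, NormedAddCommGroup (E i)]
  [∀ i, InnerProductSpace ℝ (E i)] [∀ i, FiniteDimensional ℝ (E i)]

/-- `U i t`: embedding of the `i`-th block into the product space. -/
def blockEmbed (i : Fin n) (t : E i) : PiLp 2 E :=
  (WithLp.equiv 2 (∀ j, E j)).symm (Pi.single i t)

lemma blockEmbed_smul (i : Fin n) (c : ℝ) (t : E i) :
    blockEmbed (E := E) i (c • t) = c • blockEmbed i t := by
  simp only [blockEmbed]
  ext j
  simp [Pi.single_smul]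

lemma inner_blockEmbed (y : PiLp 2 E) (i : Fin n) (t : E i) :
    ⟪y, blockEmbed i t⟫ = ⟪y i, t⟫ := by
  rw [PiLp.inner_apply]
  rw [Finset.sum_eq_single i]
  · simp [blockEmbed]
  · intro j _ hj
    simp [blockEmbed, Pi.single_eq_of_ne hj]
  · simp

lemma fderiv_inner_gradient (f : PiLp 2 E → ℝ) (hf : Differentiable ℝ f)
    (y u : PiLp 2 E) : fderiv ℝ f y u = ⟪gradient f y, u⟫ := by
  have h := (hf y).hasGradientAt
  rw [hasGradientAt_iff_hasFDerivAt] at h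
  rw [h.fderiv]
  simp [InnerProductSpace.toDual_apply_apply]

lemma descent (f : PiLp 2 E → ℝ) (hf : Differentiable ℝ f) (L : Fin n → ℝ)
    (i : Fin n)
    (hLip : ∀ (y : PiLp 2 E) (t : E i),
      ‖(gradient f (y + blockEmbed i t)) i - (gradient f y) i‖ ≤ L i * ‖t‖)
    (x : PiLp 2 E) (t : E i) :
    f (x + blockEmbed i t) ≤ f x + ⟪(gradient f x) i, t⟫ + L i / 2 * ‖t‖ ^ 2 := by
  set u : PiLp 2 E := blockEmbed i t with hu
  set g : ℝ → ℝ := fun τ => f (x + τ • u) - τ * ⟪(gradient f x) i, t⟫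
      - L i / 2 * τ ^ 2 * ‖t‖ ^ 2 with hg
  have hderiv : ∀ τ : ℝ, HasDerivAt g
      (⟪(gradient f (x + τ • u)) i, t⟫ - ⟪(gradient f x) i, t⟫
        - L i * τ * ‖t‖ ^ 2) τ := by
    intro τ
    have hc : HasDerivAt (fun τ : ℝ => x + τ • u) u τ := by
      simpa using ((hasDerivAt_id τ).smul_const u).const_add x
    have h1 : HasDerivAt (fun τ : ℝ => f (x + τ • u)) (fderiv ℝ f (x + τ • u) u) τ :=
      (hf (x + τ • u)).hasFDerivAt.comp_hasDerivAt τ hc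
    rw [fderiv_inner_gradient f hf, inner_blockEmbed] at h1
    have h2 : HasDerivAt (fun τ : ℝ => τ * ⟪(gradient f x) i, t⟫)
        (⟪(gradient f x) i, t⟫) τ := by
      simpa using (hasDerivAt_id τ).mul_const _
    have h3 : HasDerivAt (fun τ : ℝ => L i / 2 * τ ^ 2 * ‖t‖ ^ 2)
        (L i * τ * ‖t‖ ^ 2) τ := by
      have := ((hasDerivAt_pow 2 τ).const_mul (L i / 2)).mul_const (‖t‖ ^ 2)
      refine this.congr_deriv ?_
      ring
    exact (h1.sub h2).sub h3
  have hanti : AntitoneOn g (Set.Icc 0 1) := by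
    apply antitoneOn_of_deriv_nonpos (convex_Icc (0:ℝ) 1)
    · exact Continuous.continuousOn (by
        exact continuous_iff_continuousAt.2 fun τ => (hderiv τ).continuousAt)
    · intro τ _
      exact ((hderiv τ).differentiableAt).differentiableWithinAt
    · intro τ hτ
      rw [interior_Icc] at hτ
      rw [(hderiv τ).deriv]
      have key : ⟪(gradient f (x + τ • u)) i - (gradient f x) i, t⟫ ≤
          L i * τ * ‖t‖ ^ 2 := by
        calc ⟪(gradient f (x + τ • u)) i - (gradient f x) i, t⟫
            ≤ ‖(gradient f (x + τ • u)) i - (gradient f x) i‖ * ‖t‖ :=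
              real_inner_le_norm _ _
          _ ≤ (L i * ‖τ • t‖) * ‖t‖ := by
              have := hLip x (τ • t)
              rw [blockEmbed_smul] at this
              exact mul_le_mul_of_nonneg_right this (norm_nonneg _)
          _ ≤ L i * τ * ‖t‖ ^ 2 := by
              rw [norm_smul, Real.norm_eq_abs, abs_of_pos hτ.1]
              ring_nf
              exact le_refl _
      rw [inner_sub_left] at key
      linarith
  have h01 : g 1 ≤ g 0 := hanti (by norm_num) (by norm_num) (by norm_num)
  simp only [hg, one_smul, zero_smul, add_zero, one_pow, one_mul, zero_mul,
    ne_eq] at h01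
  nlinarith [h01]


/-- `V_i(x,t)` in the smooth case (`Ψ ≡ 0`). -/
def ViSmooth (f : PiLp 2 E → ℝ) (L : Fin n → ℝ)
    (x : PiLp 2 E) (i : Fin n) (t : E i) : ℝ :=
  ⟪(gradient f x) i, t⟫ + L i / 2 * ‖t‖ ^ 2

lemma Vi_bddBelow (f : PiLp 2 E → ℝ) (L : Fin n → ℝ) (x : PiLp 2 E) (i : Fin n)
    (hLi : 0 < L i) (s : E i) :
    -(‖(gradient f x) i‖ ^ 2 / (2 * L i)) ≤ ViSmooth f L x i s := by
  set g := (gradient f x) i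
  have h1 : -(‖g‖ * ‖s‖) ≤ ⟪g, s⟫ := by
    have := real_inner_le_norm g (-s)
    simp only [inner_neg_right, norm_neg] at this
    linarith
  have h2 : 0 ≤ (L i * ‖s‖ - ‖g‖) ^ 2 := sq_nonneg _
  rw [ViSmooth]
  have hLi' : 0 < 2 * L i := by linarith
  rw [div_eq_mul_inv]
  nlinarith [norm_nonneg s, norm_nonneg g, mul_pos hLi' (inv_pos.2 hLi'), inv_pos.2 hLi', mul_inv_cancel₀ (ne_of_gt hLi')]

lemma Vi_inf_le (f : PiLp 2 E → ℝ) (L : Fin n → ℝ) (x : PiLp 2 E) (i : Fin n)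
    (hLi : 0 < L i) :
    (⨅ s : E i, ViSmooth f L x i s) ≤ -(‖(gradient f x) i‖ ^ 2 / (2 * L i)) := by
  have hbdd : BddBelow (Set.range fun s : E i => ViSmooth f L x i s) :=
    ⟨_, Set.forall_mem_range.2 (Vi_bddBelow f L x i hLi)⟩
  set g := (gradient f x) i
  have := ciInf_le hbdd (-((L i)⁻¹ • g))
  refine this.trans_eq ?_
  rw [ViSmooth, inner_neg_right, real_inner_smul_right, real_inner_self_eq_norm_sq,
    norm_neg, norm_smul, Real.norm_eq_abs, abs_of_pos (inv_pos.2 hLi)]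
  field_simp
  ring


/-- Smooth case, one-step expected decrease with probabilities `p_i`:
`Σ_i p_i f(x + U_i T_i) ≤ f(x) − (1/2) Σ_i (p_i/L_i)‖∇_i f(x)‖² + Σ_i p_i δ_i`. -/
theorem smooth_expected_decrease
    (hn : 0 < n)
    (L : Fin n → ℝ) (hL : ∀ i, 0 < L i)
    (f : PiLp 2 E → ℝ) (hfdiff : Differentiable ℝ f) (hfconv : ConvexOn ℝ Set.univ f)
    (hLip : ∀ (x : PiLp 2 E) (i : Fin n) (t : E i),
      ‖(gradient f (x + blockEmbed i t)) i - (gradient f x) i‖ ≤ L i * ‖t‖)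
    (p : Fin n → ℝ) (hp : ∀ i, 0 < p i) (hpsum : ∑ i, p i = 1)
    (x : PiLp 2 E) (δ : Fin n → ℝ) (hδ : ∀ i, 0 ≤ δ i)
    (T : PiLp 2 E)
    (hT : ∀ i, ViSmooth f L x i (T i) ≤ min 0 (δ i + ⨅ s : E i, ViSmooth f L x i s)) :
    ∑ i, p i * f (x + blockEmbed i (T i)) ≤
      f x - (1 / 2) * ∑ i, p i / L i * ‖(gradient f x) i‖ ^ 2 + ∑ i, p i * δ i := by
  have key : ∀ i, f (x + blockEmbed i (T i)) ≤
      f x + δ i - ‖(gradient f x) i‖ ^ 2 / (2 * L i) := by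
    intro i
    have h1 := descent f hfdiff L i (fun y t => hLip y i t) x (T i)
    have h2 : ViSmooth f L x i (T i) ≤ δ i - ‖(gradient f x) i‖ ^ 2 / (2 * L i) := by
      have := (hT i).trans (min_le_right _ _)
      have h3 := Vi_inf_le f L x i (hL i)
      linarith
    rw [ViSmooth] at h2
    linarith
  calc ∑ i, p i * f (x + blockEmbed i (T i))
      ≤ ∑ i, p i * (f x + δ i - ‖(gradient f x) i‖ ^ 2 / (2 * L i)) := by
        apply Finset.sum_le_sum
        intro i _
        exact mul_le_mul_of_nonneg_left (key i) (hp i).le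
    _ = f x - (1 / 2) * ∑ i, p i / L i * ‖(gradient f x) i‖ ^ 2 + ∑ i, p i * δ i := by
        have hsum : ∀ i, p i * (f x + δ i - ‖(gradient f x) i‖ ^ 2 / (2 * L i))
            = p i * f x + p i * δ i - 1/2 * (p i / L i * ‖(gradient f x) i‖ ^ 2) := by
          intro i; have := (hL i).ne'; field_simp
        simp only [hsum]
        rw [Finset.sum_sub_distrib, Finset.sum_add_distrib, ← Finset.sum_mul, hpsum,
          ← Finset.mul_sum]
        ring
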